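/- Let $C$ be a finitely generated associative conformal algebra over $H = k[D]$ (char $k = 0$) such that $\dim_k C/DC < \infty$. Then $C$ is a finitely generated $H$-module. -/

import Mathlib

open Finset

/-- Auxiliary chain of subspaces: start with the span of `B` and repeatedly
adjoin all right multiplications by elements of `B`. -/
def Uchain {k : Type*} {C : Type*} [Field k] [AddCommGroup C] [Module k C]
    (mul : ℕ → C →ₗ[k] C →ₗ[k] C) (B : Finset C) : ℕ → Submodule k C
  | 0 => Submodule.span k (↑B : Set C)
  | r + 1 =>
      Submodule.span k
        ((↑(Uchain mul B r) : Set C) ∪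
          {z | ∃ u ∈ Uchain mul B r, ∃ b ∈ B, ∃ n : ℕ, z = mul n u b})

/-- A finitely generated associative conformal algebra `C` with
`dim_k C/DC < ∞` is a finitely generated `k[D]`-module: there is a finite set `G`
such that the elements `Dˢ g` (`g ∈ G`, `s ≥ 0`) span `C` over `k`. -/
theorem fg_conformal_finite
    {k : Type*} [Field k] [CharZero k]
    {C : Type*} [AddCommGroup C] [Module k C]
    (Dop : C →ₗ[k] C) (mul : ℕ → C →ₗ[k] C →ₗ[k] C)
    (hloc : ∀ x y : C, ∃ N : ℕ, ∀ n ≥ N, mul n x y = 0)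
    (hC2 : ∀ (n : ℕ) (x y : C),
      mul n x (Dop y) = Dop (mul n x y) + (n : k) • mul (n - 1) x y)
    (hC3 : ∀ (n : ℕ) (x y : C),
      mul n (Dop x) y = -((n : k)) • mul (n - 1) x y)
    (hassocL : ∀ (n m : ℕ) (u v w : C),
      mul m (mul n u v) w =
        ∑ s ∈ range (n + 1),
          ((-1 : k) ^ s * (n.choose s : k)) • mul (n - s) u (mul (m + s) v w))
    (hassocR : ∀ (n m : ℕ) (u v w : C),
      mul n u (mul m v w) =
        ∑ s ∈ range (n + 1), ((n.choose s : k)) • mul (m + s) (mul (n - s) u v) w)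
    -- `C` is finitely generated as a conformal algebra:
    (B : Finset C)
    (hgen : ∀ S : Submodule k C, (↑B : Set C) ⊆ S →
      (∀ x ∈ S, Dop x ∈ S) →
      (∀ (n : ℕ), ∀ x ∈ S, ∀ y ∈ S, mul n x y ∈ S) → S = ⊤)
    -- `dim_k C/DC < ∞`:
    (hquot : FiniteDimensional k (C ⧸ LinearMap.range Dop)) :
    ∃ G : Finset C,
      Submodule.span k {y : C | ∃ g ∈ G, ∃ s : ℕ, (Dop ^ s) g = y} = ⊤ := by
  classical
  choose Nf hNf using hloc
  set U : ℕ → Submodule k C := Uchain mul B with hUdef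
  have hU0 : U 0 = Submodule.span k (↑B : Set C) := rfl
  have hUsucc : ∀ r, U (r + 1) =
      Submodule.span k
        ((↑(U r) : Set C) ∪ {z | ∃ u ∈ U r, ∃ b ∈ B, ∃ n : ℕ, z = mul n u b}) :=
    fun r => rfl
  have hUmono : Monotone U := by
    apply monotone_nat_of_le_succ
    intro r
    rw [hUsucc]
    exact fun x hx => Submodule.subset_span (Or.inl hx)
  have hprod_mem : ∀ r (n : ℕ) (u : C), u ∈ U r → ∀ b ∈ B, mul n u b ∈ U (r + 1) := by
    intro r n u hu b hb
    rw [hUsucc]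
    exact Submodule.subset_span (Or.inr ⟨u, hu, b, hb, n, rfl⟩)
  -- L0 : `D^{n+1} c ∘ₙ v = 0`
  have L0 : ∀ (n : ℕ) (c v : C), mul n ((Dop ^ (n + 1)) c) v = 0 := by
    intro n
    induction n with
    | zero =>
      intro c v
      rw [pow_one]
      simpa using hC3 0 c v
    | succ n ih =>
      intro c v
      have h1 : (Dop ^ (n + 2)) c = Dop ((Dop ^ (n + 1)) c) := by
        rw [pow_succ']; rfl
      rw [h1, hC3]
      simp [ih c v]
  -- L1 : `(D^s u) ∘ₙ v` is a scalar multiple of some `u ∘ₘ v`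
  have L1 : ∀ (s n : ℕ) (u v : C), ∃ (a : k) (m : ℕ),
      mul n ((Dop ^ s) u) v = a • mul m u v := by
    intro s
    induction s with
    | zero => intro n u v; exact ⟨1, n, by simp⟩
    | succ s ih =>
      intro n u v
      have h1 : (Dop ^ (s + 1)) u = (Dop ^ s) (Dop u) := by
        rw [pow_succ]; rfl
      obtain ⟨a, m, hm⟩ := ih n (Dop u) v
      refine ⟨a * (-(m : k)), m - 1, ?_⟩
      rw [h1, hm, hC3, smul_smul]
  -- The `D`-stable span of the union of the chain
  set S : Submodule k C := ⨆ p : ℕ × ℕ, Submodule.map (Dop ^ p.2) (U p.1) with hSdef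
  have hmemS : ∀ (r s : ℕ) (u : C), u ∈ U r → (Dop ^ s) u ∈ S :=
    fun r s u hu => Submodule.mem_iSup_of_mem (r, s) ⟨u, hu, rfl⟩
  have hUsubS : ∀ r, U r ≤ S := by
    intro r x hx
    simpa using hmemS r 0 x hx
  have hSD : ∀ x ∈ S, Dop x ∈ S := by
    intro x hx
    refine Submodule.iSup_induction (x := x)
      (motive := fun x => Dop x ∈ S) _ hx ?_ ?_ ?_
    · rintro ⟨r, s⟩ y ⟨u, hu, rfl⟩
      have : Dop ((Dop ^ s) u) = (Dop ^ (s + 1)) u := by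
        rw [pow_succ']; rfl
      rw [this]
      exact hmemS r (s + 1) u hu
    · simpa using S.zero_mem
    · intro a b ha hb
      rw [map_add]
      exact S.add_mem ha hb
  -- right multiplication by elements of `B` preserves `S`
  have RB : ∀ x ∈ S, ∀ (n : ℕ), ∀ b ∈ B, mul n x b ∈ S := by
    intro x hx
    refine Submodule.iSup_induction (x := x)
      (motive := fun x => ∀ (n : ℕ), ∀ b ∈ B, mul n x b ∈ S) _ hx ?_ ?_ ?_
    · rintro ⟨r, s⟩ y ⟨u, hu, rfl⟩ n b hb
      obtain ⟨a, m, hm⟩ := L1 s n u b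
      rw [hm]
      exact S.smul_mem a (hUsubS (r + 1) (hprod_mem r m u hu b hb))
    · intro n b _; simp only [LinearMap.map_zero, LinearMap.zero_apply]
      exact S.zero_mem
    · intro y z hy hz n b hb
      have : mul n (y + z) b = mul n y b + mul n z b := by
        rw [map_add]; rfl
      rw [this]
      exact S.add_mem (hy n b hb) (hz n b hb)
  -- products with right factor in the chain stay in `S`
  have CORE : ∀ r', ∀ v ∈ U r', ∀ x ∈ S, ∀ (n : ℕ), mul n x v ∈ S := by
    intro r'
    induction r' with
    | zero =>
      intro v hv
      rw [hU0] at hv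
      refine Submodule.span_induction
        (p := fun v _ => ∀ x ∈ S, ∀ (n : ℕ), mul n x v ∈ S) ?_ ?_ ?_ ?_ hv
      · intro b hb x hx n
        exact RB x hx n b hb
      · intro x _ n; simp only [map_zero]; exact S.zero_mem
      · intro y z _ _ hy hz x hx n
        rw [map_add]
        exact S.add_mem (hy x hx n) (hz x hx n)
      · intro a y _ hy x hx n
        rw [map_smul]
        exact S.smul_mem a (hy x hx n)
    | succ r ih =>
      intro v hv
      rw [hUsucc] at hv
      refine Submodule.span_induction
        (p := fun v _ => ∀ x ∈ S, ∀ (n : ℕ), mul n x v ∈ S) ?_ ?_ ?_ ?_ hv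
      · rintro z (hz | ⟨w, hw, b, hb, m, rfl⟩)
        · exact ih z hz
        · intro x hx n
          rw [hassocR n m x w b]
          refine Submodule.sum_mem _ ?_
          intro s _
          exact S.smul_mem _ (RB _ (ih w hw x hx (n - s)) (m + s) b hb)
      · intro x _ n; simp only [map_zero]; exact S.zero_mem
      · intro y z _ _ hy hz x hx n
        rw [map_add]
        exact S.add_mem (hy x hx n) (hz x hx n)
      · intro a y _ hy x hx n
        rw [map_smul]
        exact S.smul_mem a (hy x hx n)
  -- products with right factor `D^t v`, `v` in the chain
  have CORED : ∀ (t r' : ℕ), ∀ v ∈ U r', ∀ x ∈ S, ∀ (n : ℕ),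
      mul n x ((Dop ^ t) v) ∈ S := by
    intro t
    induction t with
    | zero =>
      intro r' v hv x hx n
      simpa using CORE r' v hv x hx n
    | succ t ih =>
      intro r' v hv x hx n
      have h1 : (Dop ^ (t + 1)) v = Dop ((Dop ^ t) v) := by
        rw [pow_succ']; rfl
      rw [h1, hC2]
      exact S.add_mem (hSD _ (ih r' v hv x hx n)) (S.smul_mem _ (ih r' v hv x hx (n - 1)))
  have hclosed : ∀ (n : ℕ), ∀ x ∈ S, ∀ y ∈ S, mul n x y ∈ S := by
    intro n x hx y hy
    refine Submodule.iSup_induction (x := y)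
      (motive := fun y => mul n x y ∈ S) _ hy ?_ ?_ ?_
    · rintro ⟨r, t⟩ z ⟨v, hv, rfl⟩
      exact CORED t r v hv x hx n
    · simp only [map_zero]; exact S.zero_mem
    · intro a b ha hb
      rw [map_add]
      exact S.add_mem ha hb
  have hStop : S = ⊤ := by
    refine hgen S ?_ hSD hclosed
    intro b hb
    exact hUsubS 0 (Submodule.subset_span hb)
  -- stabilization in the quotient
  set π : C →ₗ[k] C ⧸ LinearMap.range Dop := (LinearMap.range Dop).mkQ with hπdef
  have hNoeth : IsNoetherian k (C ⧸ LinearMap.range Dop) := IsNoetherian.iff_fg.mpr hquot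
  obtain ⟨r0, hr0⟩ := monotone_stabilizes_iff_noetherian.mpr hNoeth
    ⟨fun r => Submodule.map π (U r), fun a b hab => Submodule.map_mono (hUmono hab)⟩
  set F : Submodule k C := ⨆ s : ℕ, Submodule.map (Dop ^ s) (U r0) with hFdef
  have hmemF : ∀ (s : ℕ) (u : C), u ∈ U r0 → (Dop ^ s) u ∈ F :=
    fun s u hu => Submodule.mem_iSup_of_mem s ⟨u, hu, rfl⟩
  have hUr0F : U r0 ≤ F := by
    intro x hx; simpa using hmemF 0 x hx
  have hFD : ∀ x ∈ F, Dop x ∈ F := by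
    intro x hx
    refine Submodule.iSup_induction (x := x)
      (motive := fun x => Dop x ∈ F) _ hx ?_ ?_ ?_
    · rintro s y ⟨u, hu, rfl⟩
      have : Dop ((Dop ^ s) u) = (Dop ^ (s + 1)) u := by rw [pow_succ']; rfl
      rw [this]
      exact hmemF (s + 1) u hu
    · simpa using F.zero_mem
    · intro a b ha hb; rw [map_add]; exact F.add_mem ha hb
  have hFDpow : ∀ (m : ℕ), ∀ x ∈ F, (Dop ^ m) x ∈ F := by
    intro m
    induction m with
    | zero => intro x hx; simpa using hx
    | succ m ih =>
      intro x hx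
      have : (Dop ^ (m + 1)) x = Dop ((Dop ^ m) x) := by rw [pow_succ']; rfl
      rw [this]
      exact hFD _ (ih x hx)
  have hUr_le : ∀ r, U r ≤ F ⊔ LinearMap.range Dop := by
    intro r x hx
    have h1 : π x ∈ Submodule.map π (U r0) := by
      have h2 : Submodule.map π (U r) ≤ Submodule.map π (U (max r r0)) :=
        Submodule.map_mono (hUmono (le_max_left r r0))
      have h3 := hr0 (max r r0) (le_max_right r r0)
      -- h3 : map π (U r0) = map π (U (max r r0)) (as OrderHom values)
      have h4 : Submodule.map π (U r0) = Submodule.map π (U (max r r0)) := h3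
      rw [h4]
      exact h2 ⟨x, hx, rfl⟩
    obtain ⟨x0, hx0, he⟩ := h1
    have hsub : x - x0 ∈ LinearMap.range Dop := by
      have he' : (Submodule.Quotient.mk x0 : C ⧸ LinearMap.range Dop) =
          Submodule.Quotient.mk x := he
      have h1 : x0 - x ∈ LinearMap.range Dop := (Submodule.Quotient.eq _).mp he'
      simpa [neg_sub] using (LinearMap.range Dop).neg_mem h1
    have hx0F : x0 ∈ F := hUr0F hx0
    have : x = x0 + (x - x0) := by abel
    rw [this]
    exact Submodule.add_mem _ (Submodule.mem_sup_left hx0F) (Submodule.mem_sup_right hsub)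
  have hTop1 : (⊤ : Submodule k C) ≤ F ⊔ LinearMap.range Dop := by
    rw [← hStop]
    refine iSup_le ?_
    rintro ⟨r, s⟩
    cases s with
    | zero =>
      intro x hx
      obtain ⟨u, hu, rfl⟩ := hx
      simp only [pow_zero, Module.End.one_apply]
      exact hUr_le r hu
    | succ t =>
      intro x hx
      obtain ⟨u, hu, rfl⟩ := hx
      have : (Dop ^ (t + 1)) u = Dop ((Dop ^ t) u) := by rw [pow_succ']; rfl
      rw [this]
      exact Submodule.mem_sup_right ⟨(Dop ^ t) u, rfl⟩
  have hTopm : ∀ (m : ℕ), (⊤ : Submodule k C) ≤ F ⊔ LinearMap.range (Dop ^ (m + 1)) := by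
    intro m
    induction m with
    | zero => simpa using hTop1
    | succ m ih =>
      intro x hx
      obtain ⟨f, hf, g, hg, hfg⟩ := Submodule.mem_sup.mp (ih hx)
      obtain ⟨y, rfl⟩ := hg
      obtain ⟨f', hf', g', hg', hfg'⟩ := Submodule.mem_sup.mp (hTop1 (Submodule.mem_top (x := y)))
      obtain ⟨z, rfl⟩ := hg'
      have : x = (f + (Dop ^ (m + 1)) f') + (Dop ^ (m + 2)) z := by
        have h1 : (Dop ^ (m + 2)) z = (Dop ^ (m + 1)) (Dop z) := by
          rw [pow_succ]; rfl
        rw [h1, ← hfg, ← hfg', map_add]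
        abel
      rw [this]
      refine Submodule.add_mem _ (Submodule.mem_sup_left ?_) (Submodule.mem_sup_right ⟨z, rfl⟩)
      exact F.add_mem hf (hFDpow (m + 1) f' hf')
  -- KEY : every right multiplication by `b ∈ B` lands in `U (r0 + 1)`
  have KEY : ∀ (u : C) (n : ℕ), ∀ b ∈ B, mul n u b ∈ U (r0 + 1) := by
    intro u n b hb
    obtain ⟨f, hf, g, hg, hfg⟩ :=
      Submodule.mem_sup.mp (hTopm n (Submodule.mem_top (x := u)))
    obtain ⟨c, rfl⟩ := hg
    have h2 : mul n u b = mul n f b := by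
      have : mul n u b = mul n f b + mul n ((Dop ^ (n + 1)) c) b := by
        rw [← hfg, map_add]; rfl
      rw [this, L0, add_zero]
    rw [h2]
    refine Submodule.iSup_induction (x := f)
      (motive := fun f => mul n f b ∈ U (r0 + 1)) _ hf ?_ ?_ ?_
    · rintro s y ⟨w, hw, rfl⟩
      obtain ⟨a, m, hm⟩ := L1 s n w b
      rw [hm]
      exact Submodule.smul_mem _ a (hprod_mem r0 m w hw b hb)
    · simp only [map_zero, LinearMap.zero_apply]
      exact Submodule.zero_mem _
    · intro y z hy hz
      have : mul n (y + z) b = mul n y b + mul n z b := by rw [map_add]; rfl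
      rw [this]
      exact Submodule.add_mem _ hy hz
  have hUle : ∀ r, U r ≤ U (r0 + 1) := by
    intro r
    induction r with
    | zero => exact hUmono (Nat.zero_le _)
    | succ r ih =>
      rw [hUsucc r]
      rw [Submodule.span_le]
      rintro x (hx | ⟨u, _, b, hb, n, rfl⟩)
      · exact ih hx
      · exact KEY u n b hb
  -- finite generation of each `U r`
  have hUfg : ∀ r, (U r).FG := by
    intro r
    induction r with
    | zero => exact ⟨B, rfl⟩
    | succ r ih =>
      obtain ⟨T, hT⟩ := ih
      set N : ℕ := (T ×ˢ B).sup (fun p => Nf p.1 p.2) with hNdef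
      set T' : Finset C :=
        Finset.image (fun p : C × C × ℕ => mul p.2.2 p.1 p.2.1)
          (T ×ˢ B ×ˢ Finset.range (N + 1)) with hT'def
      refine ⟨T ∪ T', ?_⟩
      apply le_antisymm
      · rw [Submodule.span_le]
        intro x hx
        rcases Finset.mem_union.mp (by exact_mod_cast hx) with hx | hx
        · exact hUmono (Nat.le_succ r) (hT ▸ Submodule.subset_span hx)
        · obtain ⟨⟨t, b, n⟩, hmem, rfl⟩ := Finset.mem_image.mp hx
          simp only [Finset.mem_product] at hmem
          exact hprod_mem r n t (hT ▸ Submodule.subset_span hmem.1) b hmem.2.1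
      · rw [hUsucc r, Submodule.span_le]
        rintro x (hx | ⟨u, hu, b, hb, n, rfl⟩)
        · rw [← hT] at hx
          exact Submodule.span_mono (by simp [Finset.coe_union]) hx
        · rw [← hT] at hu
          refine Submodule.span_induction
            (p := fun u _ => ∀ (n : ℕ), mul n u b ∈ Submodule.span k (↑(T ∪ T') : Set C))
            ?_ ?_ ?_ ?_ hu n
          · intro t ht n'
            have ht' : t ∈ T := Finset.mem_coe.mp ht
            by_cases hn : n' ≤ N
            · refine Submodule.subset_span ?_
              simp only [Finset.coe_union, Set.mem_union]
              right
              refine Finset.mem_coe.mpr (Finset.mem_image.mpr ⟨(t, b, n'), ?_, rfl⟩)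
              simp only [Finset.mem_product]
              exact ⟨ht', hb, Finset.mem_range.mpr (Nat.lt_succ_of_le hn)⟩
            · have hle : Nf t b ≤ N := Finset.le_sup (f := fun p => Nf p.1 p.2) (b := (t, b))
                (Finset.mem_product.mpr ⟨ht', hb⟩)
              rw [hNf t b n' (le_trans hle (le_of_not_ge hn))]
              exact Submodule.zero_mem _
          · intro n'
            simp only [map_zero, LinearMap.zero_apply]
            exact Submodule.zero_mem _
          · intro y z _ _ hy hz n'
            have : mul n' (y + z) b = mul n' y b + mul n' z b := by rw [map_add]; rfl
            rw [this]
            exact Submodule.add_mem _ (hy n') (hz n')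
          · intro a y _ hy n'
            have : mul n' (a • y) b = a • mul n' y b := by rw [map_smul]; rfl
            rw [this]
            exact Submodule.smul_mem _ a (hy n')
  -- conclusion
  obtain ⟨G, hG⟩ := hUfg (r0 + 1)
  refine ⟨G, le_antisymm le_top ?_⟩
  rw [← hStop]
  refine iSup_le ?_
  rintro ⟨r, s⟩ x ⟨u, hu, rfl⟩
  have hu' : u ∈ Submodule.span k (↑G : Set C) := by rw [hG]; exact hUle r hu
  have himg : (Dop ^ s) u ∈ Submodule.map (Dop ^ s) (Submodule.span k (↑G : Set C)) :=
    ⟨u, hu', rfl⟩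
  rw [Submodule.map_span] at himg
  refine Submodule.span_mono ?_ himg
  rintro y ⟨g, hg, rfl⟩
  exact ⟨g, hg, s, rfl⟩
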